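/- Let H be a real Hilbert space and T_l : H → H a bounded linear operator with ‖T_l‖ ≤ 1 which is self-adjoint and positive (⟨T_l x, x⟩ ≥ 0 for all x ∈ H), and assume Ker(I − T_l) = {0}. Let z ∈ H, define T x := T_l x + z, and assume T has a fixed point φ̄ (which is then unique). Let (d_k) be a sequence with d_k ∈ [0,1] such that Σ_{k=1}^{∞} d_k (1 − d_k) diverges. Then for every φ₁ ∈ H, the segmenting Mann iteration φ_{k+1} := (1 − d_k) φ_k + d_k T(φ_k) converges strongly to φ̄, and likewise the sequence (T(φ_k)) converges strongly to φ̄. -/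

import Mathlib

open Filter Finset

section Aux
variable {H : Type*} [NormedAddCommGroup H] [InnerProductSpace ℝ H]

/-- Cauchy–Schwarz for the semi-inner-product induced by a positive symmetric operator. -/
lemma mann_aux_cs (A : H →L[ℝ] H)
    (hsa : ∀ x y : H, inner ℝ (A x) y = (inner ℝ x (A y) : ℝ))
    (hpos : ∀ x : H, 0 ≤ (inner ℝ (A x) x : ℝ)) (x y : H) :
    (inner ℝ (A x) y : ℝ) ^ 2 ≤ (inner ℝ (A x) x : ℝ) * (inner ℝ (A y) y : ℝ) := by
  set a : ℝ := inner ℝ (A x) x with ha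
  set c : ℝ := inner ℝ (A y) y with hc
  set b : ℝ := inner ℝ (A x) y with hb
  have hyx : (inner ℝ (A y) x : ℝ) = b := by
    rw [hsa y x]; rw [hb]; exact (real_inner_comm y (A x)).symm
  have expand : ∀ t : ℝ, 0 ≤ a + 2 * t * b + t ^ 2 * c := by
    intro t
    have h := hpos (x + t • y)
    have e1 : (inner ℝ (A (x + t • y)) (x + t • y) : ℝ) = a + 2 * t * b + t ^ 2 * c := by
      simp only [map_add, map_smul, inner_add_left, inner_add_right,
        real_inner_smul_left, real_inner_smul_right, hyx, ← ha, ← hc, ← hb]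
      ring
    linarith [e1 ▸ h]
  rcases (hpos y).lt_or_eq with hcpos | hc0
  · have h1 := hpos (c • x - b • y)
    have e2 : (inner ℝ (A (c • x - b • y)) (c • x - b • y) : ℝ) = c * (c * a - b ^ 2) := by
      simp only [map_sub, map_smul, inner_sub_left, inner_sub_right,
        real_inner_smul_left, real_inner_smul_right, hyx, ← ha, ← hc, ← hb]
      ring
    rw [e2] at h1
    nlinarith [h1]
  · have hc0' : c = 0 := by rw [hc, ← hc0]
    have hb0 : b = 0 := by
      by_contra hbne
      have h := expand (-((a + 1) / (2 * b)))
      rw [hc0'] at h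
      have : 2 * (-((a + 1) / (2 * b))) * b = -(a + 1) := by
        field_simp
      nlinarith [h, this]
    rw [hb0, hc0']
    nlinarith [hpos x]

lemma mann_aux_sq (A : H →L[ℝ] H)
    (hsa : ∀ x y : H, inner ℝ (A x) y = (inner ℝ x (A y) : ℝ))
    (hpos : ∀ x : H, 0 ≤ (inner ℝ (A x) x : ℝ))
    (hle : ∀ x : H, (inner ℝ (A x) x : ℝ) ≤ ‖x‖ ^ 2) (x : H) :
    ‖A x‖ ^ 2 ≤ (inner ℝ (A x) x : ℝ) := by
  have h := mann_aux_cs A hsa hpos x (A x)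
  have h2 : (inner ℝ (A x) (A x) : ℝ) = ‖A x‖ ^ 2 := real_inner_self_eq_norm_sq (A x)
  have h3 := hle (A x)
  rw [h2] at h
  nlinarith [hpos x, sq_nonneg ‖A x‖, norm_nonneg (A x)]


lemma mann_aux_decay (A : H →L[ℝ] H)
    (hsa : ∀ x y : H, inner ℝ (A x) y = (inner ℝ x (A y) : ℝ))
    (hpos : ∀ x : H, 0 ≤ (inner ℝ (A x) x : ℝ))
    (hle : ∀ x : H, (inner ℝ (A x) x : ℝ) ≤ ‖x‖ ^ 2)
    (d : ℕ → ℝ) (hd : ∀ k, d k ∈ Set.Icc (0 : ℝ) 1)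
    (hdiv : Tendsto (fun n => ∑ k ∈ Icc 1 n, d k * (1 - d k)) atTop atTop)
    (η : ℕ → H) (hrec : ∀ k, 1 ≤ k → η (k + 1) = η k - d k • A (η k)) :
    Tendsto (fun k => A (η k)) atTop (nhds 0) ∧ ∀ k, 1 ≤ k → ‖η k‖ ≤ ‖η 1‖ := by
  set a : ℕ → ℝ := fun k => inner ℝ (A (η k)) (η k) with haDef
  have hanon : ∀ k, 0 ≤ a k := fun k => hpos (η k)
  have hsq : ∀ k, ‖A (η k)‖ ^ 2 ≤ a k := fun k => mann_aux_sq A hsa hpos hle (η k)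
  -- expansions
  have E1 : ∀ k, 1 ≤ k → a (k + 1) =
      a k - 2 * d k * ‖A (η k)‖ ^ 2 + d k ^ 2 * (inner ℝ (A (A (η k))) (A (η k)) : ℝ) := by
    intro k hk
    have h1 : (inner ℝ (A (A (η k))) (η k) : ℝ) = ‖A (η k)‖ ^ 2 := by
      rw [hsa (A (η k)) (η k)]
      exact real_inner_self_eq_norm_sq (A (η k))
    have h2 : (inner ℝ (A (η k)) (A (η k)) : ℝ) = ‖A (η k)‖ ^ 2 :=
      real_inner_self_eq_norm_sq (A (η k))
    rw [haDef]
    simp only [hrec k hk, map_sub, map_smul, inner_sub_left, inner_sub_right,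
      real_inner_smul_left, real_inner_smul_right, h1, h2]
    ring
  have E2 : ∀ k, 1 ≤ k → ‖η (k + 1)‖ ^ 2 =
      ‖η k‖ ^ 2 - 2 * d k * a k + d k ^ 2 * ‖A (η k)‖ ^ 2 := by
    intro k hk
    have h1 : (inner ℝ (η k) (d k • A (η k)) : ℝ) = d k * a k := by
      rw [real_inner_smul_right, haDef]
      simp [real_inner_comm]
    rw [hrec k hk, @norm_sub_sq_real, h1, norm_smul]
    simp [mul_pow, abs_of_nonneg (hd k).1]
    ring
  have hstep1 : ∀ k, 1 ≤ k → a (k + 1) ≤ a k := by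
    intro k hk
    have h3 := hle (A (η k))
    have hd0 := (hd k).1
    have hd1 := (hd k).2
    have hn := sq_nonneg ‖A (η k)‖
    nlinarith [E1 k hk, mul_le_mul_of_nonneg_left h3 (sq_nonneg (d k)),
      mul_nonneg (mul_nonneg hd0 (by linarith : (0:ℝ) ≤ 2 - d k)) hn]
  have hstep2 : ∀ k, 1 ≤ k →
      ‖η (k + 1)‖ ^ 2 ≤ ‖η k‖ ^ 2 - (d k * (1 - d k)) * a k := by
    intro k hk
    have h3 := hsq k
    have hd0 := (hd k).1
    have hd1 := (hd k).2
    have ha0 := hanon k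
    nlinarith [E2 k hk]
  have hnormdec : ∀ k, 1 ≤ k → ‖η (k + 1)‖ ≤ ‖η k‖ := by
    intro k hk
    have h := hstep2 k hk
    have hd0 := (hd k).1
    have hd1 := (hd k).2
    nlinarith [norm_nonneg (η (k + 1)), norm_nonneg (η k),
      mul_nonneg (mul_nonneg hd0 (by linarith : (0:ℝ) ≤ 1 - d k)) (hanon k)]
  have hnorm1 : ∀ k, 1 ≤ k → ‖η k‖ ≤ ‖η 1‖ := by
    intro k hk
    induction k, hk using Nat.le_induction with
    | base => exact le_refl _
    | succ n hn ih => exact le_trans (hnormdec n hn) ih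
  have hamono : ∀ i j, 1 ≤ i → i ≤ j → a j ≤ a i := by
    intro i j hi hij
    induction j, hij using Nat.le_induction with
    | base => exact le_refl _
    | succ n hn ih => exact le_trans (hstep1 n (le_trans hi hn)) ih
  have hsum : ∀ n, (∑ k ∈ Icc 1 n, (d k * (1 - d k)) * a k) ≤ ‖η 1‖ ^ 2 := by
    intro n
    have key : ∀ n, (∑ k ∈ Icc 1 n, (d k * (1 - d k)) * a k)
        ≤ ‖η 1‖ ^ 2 - ‖η (n + 1)‖ ^ 2 := by
      intro n
      induction n with
      | zero => simp [sq_nonneg]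
      | succ m ih =>
        rw [Finset.sum_Icc_succ_top (by omega : 1 ≤ m + 1)]
        have h := hstep2 (m + 1) (by omega)
        linarith
    linarith [key n, sq_nonneg ‖η (n + 1)‖]
  have hc0 : ∀ k, 0 ≤ d k * (1 - d k) := by
    intro k
    have := (hd k).1; have := (hd k).2
    nlinarith
  have haten : Tendsto a atTop (nhds 0) := by
    rw [Metric.tendsto_atTop]
    intro ε hε
    by_cases hex : ∃ N, 1 ≤ N ∧ a N < ε
    · obtain ⟨N, hN1, hNε⟩ := hex
      refine ⟨N, fun n hn => ?_⟩
      rw [Real.dist_eq, abs_of_nonneg (by linarith [hanon n] : (0:ℝ) ≤ a n - 0)]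
      have := hamono N n hN1 hn
      linarith
    · exfalso
      push_neg at hex
      obtain ⟨n, hn⟩ := (tendsto_atTop.mp hdiv (‖η 1‖ ^ 2 / ε + 1)).exists
      have hlow : (∑ k ∈ Icc 1 n, d k * (1 - d k)) * ε
          ≤ ∑ k ∈ Icc 1 n, (d k * (1 - d k)) * a k := by
        rw [Finset.sum_mul]
        refine Finset.sum_le_sum fun k hk => ?_
        have hk1 : 1 ≤ k := (Finset.mem_Icc.mp hk).1
        exact mul_le_mul_of_nonneg_left (hex k hk1) (hc0 k)
      have hbig : ‖η 1‖ ^ 2 / ε + 1 ≤ ∑ k ∈ Icc 1 n, d k * (1 - d k) := hn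
      have := hsum n
      have hεpos := hε
      have hsnn : (0:ℝ) ≤ ∑ k ∈ Icc 1 n, d k * (1 - d k) :=
        Finset.sum_nonneg fun k _ => hc0 k
      have h1 : (‖η 1‖ ^ 2 / ε + 1) * ε ≤ (∑ k ∈ Icc 1 n, d k * (1 - d k)) * ε :=
        mul_le_mul_of_nonneg_right hbig (le_of_lt hε)
      have h2 : (‖η 1‖ ^ 2 / ε + 1) * ε = ‖η 1‖ ^ 2 + ε := by
        field_simp
      nlinarith [this, hlow]
  constructor
  · rw [tendsto_zero_iff_norm_tendsto_zero]
    have hub : ∀ k, ‖A (η k)‖ ≤ Real.sqrt (a k) :=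
      fun k => (Real.le_sqrt (norm_nonneg _) (hanon k)).mpr (hsq k)
    have hsqrt : Tendsto (fun k => Real.sqrt (a k)) atTop (nhds 0) := by
      have := (Real.continuous_sqrt.tendsto 0).comp haten
      simpa [Function.comp_def] using this
    exact squeeze_zero (fun k => norm_nonneg _) hub hsqrt
  · exact hnorm1

end Aux

/-- **Corollary 4.3 (convergence of the Mann–Maz'ya iteration).** Let `H` be a real
Hilbert space and `T_l` a self-adjoint positive bounded linear operator with `‖T_l‖ ≤ 1`
and `Ker (I - T_l) = {0}`. Let `T x = T_l x + z` have a fixed point `φ̄` and let `(d k)`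
be a sequence in `[0,1]` with `∑ d k (1 - d k) = ∞`. Then for every `φ₁ ∈ H` both the
segmenting Mann iteration `(φ k)` and the sequence `(T (φ k))` converge strongly
to `φ̄`. -/
theorem mann_mazya_converges
    {H : Type*} [NormedAddCommGroup H] [InnerProductSpace ℝ H] [CompleteSpace H]
    (Tl : H →L[ℝ] H) (hTl : ‖Tl‖ ≤ 1)
    (hsa : ∀ x y : H, inner ℝ (Tl x) y = (inner ℝ x (Tl y) : ℝ))
    (hpos : ∀ x : H, 0 ≤ (inner ℝ (Tl x) x : ℝ))
    (hker : ∀ x : H, Tl x = x → x = 0)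
    (z : H) (φbar : H) (hfix : φbar = Tl φbar + z)
    (d : ℕ → ℝ) (hd : ∀ k, d k ∈ Set.Icc (0 : ℝ) 1)
    (hdiv : Tendsto (fun n => ∑ k ∈ Icc 1 n, d k * (1 - d k)) atTop atTop)
    (φ : ℕ → H)
    (hrec : ∀ k, 1 ≤ k → φ (k + 1) = (1 - d k) • φ k + d k • (Tl (φ k) + z)) :
    Tendsto (fun k => φ k) atTop (nhds φbar) ∧
      Tendsto (fun k => Tl (φ k) + z) atTop (nhds φbar) := by
  set A : H →L[ℝ] H := 1 - Tl with hAdef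
  have hAapp : ∀ x : H, A x = x - Tl x := by
    intro x
    simp [hAdef, ContinuousLinearMap.sub_apply]
  have hA_sa : ∀ x y : H, inner ℝ (A x) y = (inner ℝ x (A y) : ℝ) := by
    intro x y
    simp only [hAapp, inner_sub_left, inner_sub_right, hsa x y]
  have hA_pos : ∀ x : H, 0 ≤ (inner ℝ (A x) x : ℝ) := by
    intro x
    have h1 : (inner ℝ (Tl x) x : ℝ) ≤ ‖Tl x‖ * ‖x‖ := real_inner_le_norm _ _
    have h2 : ‖Tl x‖ ≤ ‖x‖ := by
      calc ‖Tl x‖ ≤ ‖Tl‖ * ‖x‖ := Tl.le_opNorm x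
        _ ≤ 1 * ‖x‖ := mul_le_mul_of_nonneg_right hTl (norm_nonneg x)
        _ = ‖x‖ := one_mul _
    have h3 : (inner ℝ x x : ℝ) = ‖x‖ ^ 2 := real_inner_self_eq_norm_sq x
    simp only [hAapp, inner_sub_left, h3]
    nlinarith [norm_nonneg x, norm_nonneg (Tl x)]
  have hA_le : ∀ x : H, (inner ℝ (A x) x : ℝ) ≤ ‖x‖ ^ 2 := by
    intro x
    have h3 : (inner ℝ x x : ℝ) = ‖x‖ ^ 2 := real_inner_self_eq_norm_sq x
    simp only [hAapp, inner_sub_left, h3]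
    linarith [hpos x]
  have hz : z = φbar - Tl φbar := eq_sub_of_add_eq' hfix.symm
  have hψrec : ∀ k, 1 ≤ k →
      (φ (k + 1) - φbar) = (φ k - φbar) - d k • A (φ k - φbar) := by
    intro k hk
    rw [hrec k hk, hz]
    simp only [hAapp, map_sub, smul_sub, sub_smul, one_smul, smul_add]
    abel
  obtain ⟨hAψ, -⟩ :=
    mann_aux_decay A hA_sa hA_pos hA_le d hd hdiv (fun k => φ k - φbar) hψrec
  have hclos : ∀ u : H, ∀ ε > (0:ℝ), ∃ w : H, ‖u - A w‖ < ε := by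
    intro u ε hε
    set K : Submodule ℝ H := LinearMap.range (A : H →ₗ[ℝ] H) with hK
    have horth : Kᗮ = ⊥ := by
      rw [Submodule.eq_bot_iff]
      intro y hy
      have hy' : ∀ x : H, (inner ℝ (A x) y : ℝ) = 0 := fun x =>
        (Submodule.mem_orthogonal K y).mp hy (A x) ⟨x, rfl⟩
      have hAy : A y = 0 := by
        have h := hy' (A y)
        rw [hA_sa (A y) y] at h
        exact inner_self_eq_zero.mp h
      have hTly : Tl y = y := by
        have h0 : y - Tl y = 0 := by rw [← hAapp]; exact hAy
        rw [sub_eq_zero] at h0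
        exact h0.symm
      exact hker y hTly
    have htop : K.topologicalClosure = ⊤ :=
      Submodule.topologicalClosure_eq_top_iff.mpr horth
    have hmem : u ∈ closure (K : Set H) := by
      have : u ∈ K.topologicalClosure := htop ▸ Submodule.mem_top
      exact this
    rw [Metric.mem_closure_iff] at hmem
    obtain ⟨b, hbK, hbd⟩ := hmem ε hε
    obtain ⟨w, rfl⟩ := hbK
    exact ⟨w, by rwa [dist_eq_norm] at hbd⟩
  have hψ0 : Tendsto (fun k => φ k - φbar) atTop (nhds 0) := by
    rw [NormedAddCommGroup.tendsto_nhds_zero]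
    intro ε hε
    obtain ⟨w, hw⟩ := hclos (φ 1 - φbar) (ε / 2) (by linarith)
    set e : H := (φ 1 - φbar) - A w with heDef
    obtain ⟨η, hη1, hηrec⟩ : ∃ η : ℕ → H, η 1 = w ∧
        ∀ k, 1 ≤ k → η (k + 1) = η k - d k • A (η k) := by
      refine ⟨fun n => Nat.rec w (fun k v => if k = 0 then w else v - d k • A v) n, ?_, ?_⟩
      · simp
      · intro k hk
        have hne : k ≠ 0 := by omega
        simp [hne]
    obtain ⟨ζ, hζ1, hζrec⟩ : ∃ ζ : ℕ → H, ζ 1 = e ∧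
        ∀ k, 1 ≤ k → ζ (k + 1) = ζ k - d k • A (ζ k) := by
      refine ⟨fun n => Nat.rec e (fun k v => if k = 0 then e else v - d k • A v) n, ?_, ?_⟩
      · simp
      · intro k hk
        have hne : k ≠ 0 := by omega
        simp [hne]
    obtain ⟨hAη, -⟩ := mann_aux_decay A hA_sa hA_pos hA_le d hd hdiv η hηrec
    obtain ⟨-, hζb⟩ := mann_aux_decay A hA_sa hA_pos hA_le d hd hdiv ζ hζrec
    have hdecomp : ∀ k, 1 ≤ k → φ k - φbar = A (η k) + ζ k := by
      intro k hk
      induction k, hk using Nat.le_induction with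
      | base => rw [hη1, hζ1, heDef]; abel
      | succ n hn ih =>
        rw [hψrec n hn, hηrec n hn, hζrec n hn, ih, map_add, map_sub, map_smul, smul_add]
        abel
    have hev := (NormedAddCommGroup.tendsto_nhds_zero.mp hAη) (ε / 2) (by linarith)
    filter_upwards [hev, eventually_ge_atTop 1] with k hk1 hk2
    rw [hdecomp k hk2]
    have hζk : ‖ζ k‖ ≤ ‖e‖ := by
      have := hζb k hk2
      rwa [hζ1] at this
    calc ‖A (η k) + ζ k‖ ≤ ‖A (η k)‖ + ‖ζ k‖ := norm_add_le _ _
      _ < ε / 2 + ‖e‖ := by linarith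
      _ < ε := by
          have : ‖e‖ < ε / 2 := hw
          linarith
  constructor
  · rwa [← tendsto_sub_nhds_zero_iff]
  · have h2 : Tendsto (fun k => (φ k - φbar) - A (φ k - φbar)) atTop (nhds 0) := by
      simpa using hψ0.sub hAψ
    have heq : ∀ k : ℕ, (φ k - φbar) - A (φ k - φbar) = (Tl (φ k) + z) - φbar := by
      intro k
      rw [hAapp, map_sub, hz]
      abel
    rw [← tendsto_sub_nhds_zero_iff]
    exact h2.congr fun k => by rw [heq k]
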